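/- If T(x) is the formal power series satisfying T(x) = 1 + x·T(x)^3 with T(0)=1, and A(x) is the formal power series with A(0)=0 satisfying A(x)(1-A(x))^2 = x, then A(x) = x·T(x)^2. -/

import Mathlib

open PowerSeries

theorem A_eq_X_mul_T_sq
    (T A : PowerSeries ℚ)
    (hT0 : constantCoeff T = 1) (hT : T = 1 + X * T ^ 3)
    (hA0 : constantCoeff A = 0) (hA : A * (1 - A) ^ 2 = X) :
    A = X * T ^ 2 := by
  have h1 : T * (1 - X * T ^ 2) = 1 := by linear_combination hT
  set B : PowerSeries ℚ := X * T ^ 2 with hBdef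
  have hB : B * (1 - B) ^ 2 = X := by
    rw [hBdef]
    linear_combination (X * (T * (1 - X * T ^ 2) + 1)) * h1
  have hfac : (A - B) * (1 - 2 * (A + B) + (A ^ 2 + A * B + B ^ 2)) = 0 := by
    linear_combination hA - hB
  have hB0 : constantCoeff B = 0 := by simp [hBdef]
  have hP0 : constantCoeff (1 - 2 * (A + B) + (A ^ 2 + A * B + B ^ 2)) = 1 := by
    simp [map_add, map_sub, map_mul, map_pow, hA0, hB0]
  have hPne : (1 - 2 * (A + B) + (A ^ 2 + A * B + B ^ 2)) ≠ 0 := by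
    intro h; rw [h] at hP0; simp at hP0
  rcases mul_eq_zero.mp hfac with h | h
  · exact sub_eq_zero.mp h
  · exact absurd h hPne
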